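/- arXiv:2211.15573 — 2 statements merged into one kernel-verified Lean document; each statement's English description precedes it below -/
import Mathlib

section
/- Let W be the principal branch of the Lambert W function. For any constants A>0 and B∈ℝ: lim_{y→∞} W(A·y·e^{yB})/y = max(B, 0). -/
open Real Filter

theorem stmt9 (W : ℝ → ℝ)
    (hW : ∀ y : ℝ, -Real.exp (-1) ≤ y → -1 ≤ W y ∧ W y * Real.exp (W y) = y)
    (A B : ℝ) (hA : 0 < A) :
    Filter.Tendsto (fun y => W (A * y * Real.exp (y * B)) / y)
      Filter.atTop (nhds (max B 0)) := by
  have key : ∀ a b : ℝ, 0 ≤ a → 0 ≤ b → a * Real.exp a ≤ b * Real.exp b → a ≤ b := by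
    intro a b ha hb h
    by_contra hab
    push_neg at hab
    nlinarith [Real.exp_le_exp.mpr hab.le, Real.exp_pos a, Real.exp_pos b]
  rw [Metric.tendsto_nhds]
  intro ε hε
  set M := max B 0 with hM
  have hM0 : 0 ≤ M := le_max_right _ _
  have hBM : B ≤ M := le_max_left _ _
  set e := ε / 2 with he
  have he0 : 0 < e := by positivity
  have hexp : Tendsto (fun y : ℝ => Real.exp (e * y)) atTop atTop :=
    Real.tendsto_exp_atTop.comp (tendsto_id.const_mul_atTop he0)
  filter_upwards [hexp.eventually_ge_atTop (max (A / (M + e)) (B / A)),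
    eventually_ge_atTop (1 : ℝ)] with y hy hy1
  have hy0 : 0 < y := by linarith
  have hAe : A ≤ (M + e) * Real.exp (e * y) := by
    have h1 : A / (M + e) ≤ Real.exp (e * y) := le_trans (le_max_left _ _) hy
    rw [div_le_iff₀ (by linarith)] at h1
    linarith
  have hBe : B ≤ A * Real.exp (e * y) := by
    have h1 : B / A ≤ Real.exp (e * y) := le_trans (le_max_right _ _) hy
    rw [div_le_iff₀ hA] at h1
    linarith
  have hx0 : 0 < A * y * Real.exp (y * B) := by positivity
  have hxge : -Real.exp (-1) ≤ A * y * Real.exp (y * B) := by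
    nlinarith [Real.exp_pos (-1)]
  obtain ⟨hw1, hw2⟩ := hW _ hxge
  set w := W (A * y * Real.exp (y * B)) with hw
  have hw0 : 0 ≤ w := by
    by_contra h
    push_neg at h
    nlinarith [Real.exp_pos w]
  -- upper bound: w ≤ (M + e) * y
  have hup : w ≤ (M + e) * y := by
    apply key _ _ hw0 (by positivity)
    rw [hw2]
    have h1 : Real.exp (y * B) * Real.exp (e * y) ≤ Real.exp ((M + e) * y) := by
      rw [← Real.exp_add]
      apply Real.exp_le_exp.mpr
      nlinarith
    have s1 : A * (y * Real.exp (y * B)) ≤ ((M + e) * Real.exp (e * y)) * (y * Real.exp (y * B)) :=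
      mul_le_mul_of_nonneg_right hAe (by positivity)
    have s2 : (M + e) * y * (Real.exp (y * B) * Real.exp (e * y)) ≤ (M + e) * y * Real.exp ((M + e) * y) :=
      mul_le_mul_of_nonneg_left h1 (by positivity)
    calc A * y * Real.exp (y * B) = A * (y * Real.exp (y * B)) := by ring
      _ ≤ ((M + e) * Real.exp (e * y)) * (y * Real.exp (y * B)) := s1
      _ = (M + e) * y * (Real.exp (y * B) * Real.exp (e * y)) := by ring
      _ ≤ (M + e) * y * Real.exp ((M + e) * y) := s2
  -- lower bound: (M - e) * y ≤ w
  have hlo : (M - e) * y ≤ w := by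
    rcases le_or_gt B 0 with hB | hB
    · have hM' : M = 0 := max_eq_right hB
      nlinarith
    · have hM' : M = B := max_eq_left hB.le
      rw [hM']
      rcases le_or_gt (B - e) 0 with hBe' | hBe'
      · nlinarith
      · have h := key ((B - e) * y) w (by nlinarith) hw0
        apply h
        rw [hw2]
        have h2 : Real.exp (e * y) * Real.exp ((B - e) * y) = Real.exp (y * B) := by
          rw [← Real.exp_add]; ring_nf
        have s3 : (B - e) * (y * Real.exp ((B - e) * y)) ≤ (A * Real.exp (e * y)) * (y * Real.exp ((B - e) * y)) :=
          mul_le_mul_of_nonneg_right (by linarith) (by positivity)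
        calc (B - e) * y * Real.exp ((B - e) * y) = (B - e) * (y * Real.exp ((B - e) * y)) := by ring
          _ ≤ (A * Real.exp (e * y)) * (y * Real.exp ((B - e) * y)) := s3
          _ = A * y * (Real.exp (e * y) * Real.exp ((B - e) * y)) := by ring
          _ = A * y * Real.exp (y * B) := by rw [h2]
  have hup' : w / y ≤ M + e := by rw [div_le_iff₀ hy0]; linarith
  have hlo' : M - e ≤ w / y := by rw [le_div_iff₀ hy0]; linarith
  rw [Real.dist_eq]
  have : |w / y - M| ≤ e := abs_le.mpr ⟨by linarith, by linarith⟩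
  show |w / y - M| < ε
  linarith
end

section
/- Let W be the principal branch of the Lambert W function, A > 0, B̌ ∈ ℝ, and let (η_n) be a sequence with η_n → ∞ and (κ̃_n) a sequence with κ̃_n → ∞. Then η_n·W((A/η_n)·e^{B̌/η_n + κ̃_n}) → ∞. -/
theorem stmt12 (W : ℝ → ℝ)
    (hW : ∀ y : ℝ, -Real.exp (-1) ≤ y → -1 ≤ W y ∧ W y * Real.exp (W y) = y)
    (A B : ℝ) (hA : 0 < A) (η κ : ℕ → ℝ)
    (hη : Filter.Tendsto η Filter.atTop Filter.atTop)
    (hκ : Filter.Tendsto κ Filter.atTop Filter.atTop) :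
    Filter.Tendsto (fun n => η n * W ((A / η n) * Real.exp (B / η n + κ n)))
      Filter.atTop Filter.atTop := by
  rw [Filter.tendsto_atTop]
  intro M
  have hMA : A ≤ max M A := le_max_right _ _
  have hMApos : 0 < max M A / A := div_pos (lt_of_lt_of_le hA hMA) hA
  set K : ℝ := max 1 (2 * (Real.log (max M A / A) + |B|)) with hKdef
  have hK1 : (1:ℝ) ≤ K := le_max_left _ _
  have hK2 : 2 * (Real.log (max M A / A) + |B|) ≤ K := le_max_right _ _
  filter_upwards [hη.eventually_ge_atTop (max 1 (2 * max M 0)),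
    hκ.eventually_ge_atTop K] with n hn hkn
  have hη1 : (1:ℝ) ≤ η n := le_trans (le_max_left _ _) hn
  have hηpos : 0 < η n := lt_of_lt_of_le one_pos hη1
  have hκ1 : (1:ℝ) ≤ κ n := le_trans hK1 hkn
  set x := (A / η n) * Real.exp (B / η n + κ n) with hx
  have hxpos : 0 < x := by positivity
  obtain ⟨h1, h2⟩ := hW x (by nlinarith [Real.exp_pos (-1:ℝ)])
  set w := W x with hw
  have hwpos : 0 < w := by
    by_contra h
    push_neg at h
    have hle : w * Real.exp w ≤ 0 :=
      mul_nonpos_of_nonpos_of_nonneg h (Real.exp_pos w).le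
    rw [h2] at hle
    linarith
  have hew : Real.exp w ≠ 0 := (Real.exp_pos w).ne'
  have key : η n * w = A * Real.exp (B / η n + κ n - w) := by
    rw [Real.exp_sub]
    rw [hx] at h2
    field_simp at h2 ⊢
    nlinarith [h2]
  show M ≤ η n * w
  rcases le_or_gt (κ n / 2) w with hcase | hcase
  · -- w large: η n * w ≥ η n * κ n / 2 ≥ M
    have hn2 : 2 * max M 0 ≤ η n := le_trans (le_max_right _ _) hn
    nlinarith [le_max_left M 0, le_max_right M 0]
  · -- w small: η n * w = A * exp(...) large
    rw [key]
    have hBineq : -|B| ≤ B / η n := by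
      have habs : |B / η n| ≤ |B| := by
        rw [abs_div, abs_of_pos hηpos]
        exact div_le_self (abs_nonneg B) hη1
      linarith [neg_abs_le (B / η n)]
    have hexp : Real.log (max M A / A) ≤ B / η n + κ n - w := by
      linarith
    calc M ≤ max M A := le_max_left _ _
      _ = A * (max M A / A) := by field_simp
      _ = A * Real.exp (Real.log (max M A / A)) := by rw [Real.exp_log hMApos]
      _ ≤ A * Real.exp (B / η n + κ n - w) := by
          have := Real.exp_le_exp.mpr hexp
          nlinarith
end
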